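/- Let (x,y) ∈ S. Then (x,y) ∈ S_{00}^{01} if and only if x − y − xy and (−x²y + x² + y² − xy)(x−y) are squares and (1−y)(x−y) is a nonsquare. -/

import Mathlib

open scoped Classical

noncomputable section

/-- The operation of the quasigroup `Q_{a,b}`:
`u*v = u + a(v-u)` if `v-u` is a square, `u*v = u + b(v-u)` otherwise. -/
def qop {F : Type*} [Field F] (a b u v : F) : F :=
  if IsSquare (v - u) then u + a * (v - u) else u + b * (v - u)

/-- The set `Σ(F)` of pairs `(a,b)` with `a ≠ b`, `a,b ∉ {0,1}`, and
`ab` and `(1-a)(1-b)` both squares. -/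
def SigSet (F : Type*) [Field F] : Set (F × F) :=
  {p | p.1 ≠ p.2 ∧ p.1 ≠ 0 ∧ p.1 ≠ 1 ∧ p.2 ≠ 0 ∧ p.2 ≠ 1 ∧
    IsSquare (p.1 * p.2) ∧ IsSquare ((1 - p.1) * (1 - p.2))}

/-- `Q_{a,b}` is maximally nonassociative. -/
def MaxNA {F : Type*} [Field F] (a b : F) : Prop :=
  ∀ u v w : F, qop a b (qop a b u v) w = qop a b u (qop a b v w) → u = v ∧ v = w

/-- `σ(q)`: the number of pairs `(a,b) ∈ Σ` for which `Q_{a,b}` is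
maximally nonassociative. -/
def sigmaCount (F : Type*) [Field F] : ℕ :=
  Set.ncard {p : F × F | p ∈ SigSet F ∧ MaxNA p.1 p.2}

/-- The quadratic orthomorphism `ψ_{a,b}`. -/
def psiOrtho {F : Type*} [Field F] (a b u : F) : F :=
  if IsSquare u then a * u else b * u

/-- The Associativity Equation `ψ(ψ(u)-v) = ψ(-v) + ψ(u-v-ψ(-v))`. -/
def AssocEq {F : Type*} [Field F] (a b u v : F) : Prop :=
  psiOrtho a b (psiOrtho a b u - v) =
    psiOrtho a b (-v) + psiOrtho a b (u - v - psiOrtho a b (-v))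

/-- The set `S(F)` of pairs `(x,y)` of squares with `x ≠ y`, `x,y ∉ {0,1}`. -/
def SPairs (F : Type*) [Field F] : Set (F × F) :=
  {p | IsSquare p.1 ∧ IsSquare p.2 ∧ p.1 ≠ p.2 ∧ p.1 ≠ 0 ∧ p.1 ≠ 1 ∧ p.2 ≠ 0 ∧ p.2 ≠ 1}

/-- The map `Ψ : Σ → S`, `(a,b) ↦ (a/b, (1-a)/(1-b))`. -/
def PsiMap {F : Type*} [Field F] (p : F × F) : F × F :=
  (p.1 / p.2, (1 - p.1) / (1 - p.2))

/-- The set `E(a,b)` of nonzero solutions of the Associativity Equation. -/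
def ESet {F : Type*} [Field F] (a b : F) : Set (F × F) :=
  {p | p ≠ (0, 0) ∧ AssocEq a b p.1 p.2}

/-- The set `E_{ij}^{rs}(a,b)`. -/
def ESub {F : Type*} [Field F] (a b : F) (i j r s : Fin 2) : Set (F × F) :=
  {p | p ∈ ESet a b ∧ (IsSquare p.1 ↔ i = 0) ∧ (IsSquare (-p.2) ↔ j = 0) ∧
    (IsSquare (psiOrtho a b p.1 - p.2) ↔ r = 0) ∧
    (IsSquare (p.1 - p.2 - psiOrtho a b (-p.2)) ↔ s = 0)}

/-- The set `Σ_{ij}^{rs} = {(a,b) ∈ Σ : E_{ij}^{rs}(a,b) ≠ ∅}`. -/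
def SigSub (F : Type*) [Field F] (i j r s : Fin 2) : Set (F × F) :=
  {p | p ∈ SigSet F ∧ (ESub p.1 p.2 i j r s).Nonempty}

/-- The set `S_{ij}^{rs} = Ψ(Σ_{ij}^{rs})`. -/
def SSub (F : Type*) [Field F] (i j r s : Fin 2) : Set (F × F) :=
  PsiMap '' (SigSub F i j r s)

private lemma isSquare_mul_sq_iff' {F : Type*} [Field F] {t w : F} (hw : w ≠ 0) :
    IsSquare (t * w ^ 2) ↔ IsSquare t := by
  constructor
  · rintro ⟨z, hz⟩
    refine ⟨z * w⁻¹, ?_⟩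
    field_simp
    linear_combination hz
  · rintro ⟨z, hz⟩
    exact ⟨z * w, by rw [hz]; ring⟩

/-- Lemma 2.6: for `(x,y) ∈ S`, `(x,y) ∈ S_{00}^{01}` iff `x - y - xy` and
`(-x²y + x² + y² - xy)(x-y)` are squares and `(1-y)(x-y)` is a nonsquare. -/
theorem ssub_0001_characterisation (F : Type*) [Field F] [Fintype F]
    (hodd : Odd (Fintype.card F)) (x y : F) (hxy : (x, y) ∈ SPairs F) :
    (x, y) ∈ SSub F 0 0 0 1 ↔
      IsSquare (x - y - x * y) ∧
      IsSquare ((-(x ^ 2 * y) + x ^ 2 + y ^ 2 - x * y) * (x - y)) ∧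
      ¬ IsSquare ((1 - y) * (x - y)) := by

  obtain ⟨hxsq, hysq, hxyne, hx0, hx1, hy0, hy1⟩ := hxy
  dsimp only at hxsq hysq hxyne hx0 hx1 hy0 hy1
  obtain ⟨r, hr⟩ := hysq
  have hr0 : r ≠ 0 := by rintro rfl; exact hy0 (by rw [hr, mul_zero])
  obtain ⟨s, hs⟩ := hxsq
  have hs0 : s ≠ 0 := by rintro rfl; exact hx0 (by rw [hs, mul_zero])
  have hd0 : x - y ≠ 0 := sub_ne_zero.mpr hxyne
  have h1y : (1 : F) - y ≠ 0 := sub_ne_zero.mpr (Ne.symm hy1)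
  have hx1' : x - 1 ≠ 0 := sub_ne_zero.mpr hx1
  constructor
  · rintro ⟨⟨A, B⟩, ⟨⟨hABne, hA0, hA1, hB0, hB1, hABsq, hsq2⟩,
      ⟨⟨u, v⟩, ⟨hne, heq⟩, hi, hj, hrr, hss⟩⟩, hmap⟩
    dsimp only at hABne hA0 hA1 hB0 hB1 hABsq hsq2 hne heq hi hj hrr hss
    simp only [PsiMap, Prod.mk.injEq] at hmap
    obtain ⟨hm1, hm2⟩ := hmap
    have h1A : (1 : F) - A ≠ 0 := sub_ne_zero.mpr (Ne.symm hA1)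
    have h1B : (1 : F) - B ≠ 0 := sub_ne_zero.mpr (Ne.symm hB1)
    rw [div_eq_iff hB0] at hm1
    rw [div_eq_iff h1B] at hm2
    have hBe : B = (1 - y) / (x - y) := by
      rw [eq_div_iff hd0]; linear_combination -hm2 - hm1
    have hAe : A = x * ((1 - y) / (x - y)) := by rw [← hBe]; exact hm1
    have hi' : IsSquare u := hi.mpr rfl
    have hj' : IsSquare (-v) := hj.mpr rfl
    have hpu : psiOrtho A B u = A * u := if_pos hi'
    have hpv : psiOrtho A B (-v) = A * (-v) := if_pos hj'
    rw [hpu] at hrr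
    have hrr' : IsSquare (A * u - v) := hrr.mpr rfl
    rw [hpv] at hss
    have hss' : ¬ IsSquare (u - v - A * (-v)) := fun h => absurd (hss.mp h) (by decide)
    unfold AssocEq at heq
    rw [hpu, hpv,
      show psiOrtho A B (A * u - v) = A * (A * u - v) from if_pos hrr',
      show psiOrtho A B (u - v - A * (-v)) = B * (u - v - A * (-v)) from if_neg hss'] at heq
    have hv0 : v ≠ 0 := by
      rintro rfl
      apply hss'
      simpa using hi'
    have hnv0 : -v ≠ 0 := neg_ne_zero.mpr hv0
    have heq2 : (A ^ 2 - B) * u = B * (1 - A) * (-v) := by linear_combination heq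
    have hA2B : A ^ 2 - B ≠ 0 := by
      intro h
      rw [h, zero_mul] at heq2
      exact mul_ne_zero (mul_ne_zero hB0 h1A) hnv0 heq2.symm
    have hid : (A ^ 2 - B) * (x - y) ^ 2 = (1 - y) * (x - 1) * (x - y - x * y) := by
      rw [hAe, hBe]; field_simp; ring
    have ht0 : x - y - x * y ≠ 0 := by
      intro h
      apply hA2B
      rw [h, mul_zero] at hid
      exact (mul_eq_zero.mp hid).resolve_right (pow_ne_zero 2 hd0)
    have hid2 : B * (1 - A) * (x - y) ^ 2 = (1 - y) * (x - 1) * y := by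
      rw [hAe, hBe]; field_simp; ring
    have key : u * (x - y - x * y) = y * (-v) := by
      have h3 : (1 - y) * (x - 1) * (u * (x - y - x * y) - y * (-v)) = 0 := by
        linear_combination (x - y) ^ 2 * heq2 - u * hid + (-v) * hid2
      have h4 := (mul_eq_zero.mp h3).resolve_left (mul_ne_zero h1y hx1')
      linear_combination h4
    have hu0 : u ≠ 0 := by
      intro h
      rw [h, zero_mul] at key
      exact mul_ne_zero hy0 hnv0 key.symm
    obtain ⟨w₁, hw₁⟩ := id hj'
    have hw10 : w₁ ≠ 0 := by rintro rfl; exact hnv0 (by rw [hw₁, mul_zero])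
    have hv_eq : v = -(w₁ * w₁) := by linear_combination -hw₁
    have hu_eq : u = y * (-v) / (x - y - x * y) := by
      rw [eq_div_iff ht0]; linear_combination key
    have hP1 : IsSquare (x - y - x * y) := by
      have hrep : x - y - x * y = (y * (-v) * u) * (u⁻¹) ^ 2 := by
        rw [hu_eq, hv_eq]
        have ht0' := ht0
        rw [hr] at ht0' ⊢
        field_simp
      rw [hrep]
      exact (isSquare_mul_sq_iff' (inv_ne_zero hu0)).mpr ((IsSquare.mul ⟨r, hr⟩ hj').mul hi')
    obtain ⟨w₀, hw₀⟩ := hP1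
    have hw00 : w₀ ≠ 0 := by rintro rfl; exact ht0 (by rw [hw₀, mul_zero])
    refine ⟨⟨w₀, hw₀⟩, ?_, ?_⟩
    · -- P2 : IsSquare (M * (x - y))
      have hrep : A * u - v =
          ((-(x ^ 2 * y) + x ^ 2 + y ^ 2 - x * y) * (x - y) * (x - y - x * y)) *
            (w₁ / ((x - y) * (x - y - x * y))) ^ 2 := by
        rw [hu_eq, hv_eq, hAe]
        field_simp
        ring
      rw [hrep] at hrr'
      have h5 := (isSquare_mul_sq_iff'
        (div_ne_zero hw10 (mul_ne_zero hd0 ht0))).mp hrr'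
      rw [show (-(x ^ 2 * y) + x ^ 2 + y ^ 2 - x * y) * (x - y) * (x - y - x * y)
          = ((-(x ^ 2 * y) + x ^ 2 + y ^ 2 - x * y) * (x - y)) * w₀ ^ 2 from by
        rw [hw₀]; ring] at h5
      exact (isSquare_mul_sq_iff' hw00).mp h5
    · -- P3 : ¬ IsSquare ((1 - y) * (x - y))
      intro hsq
      apply hss'
      have hrep : u - v - A * (-v) =
          ((1 - y) * (x - y) * (x - y - x * y)) *
            (w₁ * x * r / ((x - y) * (x - y - x * y))) ^ 2 := by
        rw [hu_eq, hv_eq, hAe]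
        have ht0' := ht0
        have hd0' := hd0
        rw [hr] at ht0' hd0' ⊢
        field_simp at ht0' hd0' ⊢
        ring
      rw [hrep]
      refine (isSquare_mul_sq_iff' ?_).mpr ?_
      · exact div_ne_zero (mul_ne_zero (mul_ne_zero hw10 hx0) hr0) (mul_ne_zero hd0 ht0)
      · rw [show (1 - y) * (x - y) * (x - y - x * y) = ((1 - y) * (x - y)) * w₀ ^ 2 from by
          rw [hw₀]; ring]
        exact (isSquare_mul_sq_iff' hw00).mpr hsq
  · rintro ⟨hP1, hP2, hP3⟩
    have ht0 : x - y - x * y ≠ 0 := by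
      intro ht
      apply hP3
      have h1ysq : IsSquare (1 - y) := by
        have hM : (-(x ^ 2 * y) + x ^ 2 + y ^ 2 - x * y) * (x - y)
            = (1 - y) * (x * y) ^ 2 := by
          linear_combination (x ^ 2 - x * y + y ^ 2 - x * y ^ 2) * ht
        rw [hM] at hP2
        exact (isSquare_mul_sq_iff' (mul_ne_zero hx0 hy0)).mp hP2
      obtain ⟨z, hz⟩ := h1ysq
      exact ⟨z * (s * r), by rw [show x - y = x * y from by linear_combination ht, hz, hs, hr]; ring⟩
    obtain ⟨w₀, hw₀⟩ := hP1
    have hw00 : w₀ ≠ 0 := by rintro rfl; exact ht0 (by rw [hw₀, mul_zero])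
    have hB0 : (1 - y) / (x - y) ≠ 0 := div_ne_zero h1y hd0
    have hA0 : x * ((1 - y) / (x - y)) ≠ 0 := mul_ne_zero hx0 hB0
    -- square facts for the witness
    have hc_sq : IsSquare (y / (x - y - x * y)) := by
      have hcrep : y / (x - y - x * y)
          = (x - y - x * y) * (r / (x - y - x * y)) ^ 2 := by
        have ht0' := ht0
        rw [hr] at ht0' ⊢
        field_simp
      rw [hcrep]
      exact (isSquare_mul_sq_iff' (div_ne_zero hr0 ht0)).mpr ⟨w₀, hw₀⟩
    have hMdt : IsSquare ((-(x ^ 2 * y) + x ^ 2 + y ^ 2 - x * y) * (x - y) * (x - y - x * y)) := by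
      rw [show (-(x ^ 2 * y) + x ^ 2 + y ^ 2 - x * y) * (x - y) * (x - y - x * y)
          = ((-(x ^ 2 * y) + x ^ 2 + y ^ 2 - x * y) * (x - y)) * w₀ ^ 2 from by
        rw [hw₀]; ring]
      exact (isSquare_mul_sq_iff' hw00).mpr hP2
    have hac1 : IsSquare (x * ((1 - y) / (x - y)) * (y / (x - y - x * y)) + 1) := by
      have hrep : x * ((1 - y) / (x - y)) * (y / (x - y - x * y)) + 1
          = ((-(x ^ 2 * y) + x ^ 2 + y ^ 2 - x * y) * (x - y) * (x - y - x * y)) *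
            (((x - y) * (x - y - x * y))⁻¹) ^ 2 := by
        field_simp
        ring
      rw [hrep]
      exact (isSquare_mul_sq_iff' (inv_ne_zero (mul_ne_zero hd0 ht0))).mpr hMdt
    have hs1 : ¬ IsSquare (y / (x - y - x * y) + 1 - x * ((1 - y) / (x - y))) := by
      intro hsq'
      apply hP3
      have hrep : y / (x - y - x * y) + 1 - x * ((1 - y) / (x - y))
          = ((1 - y) * (x - y) * (x - y - x * y)) *
            (x * r / ((x - y) * (x - y - x * y))) ^ 2 := by
        have ht0' := ht0
        have hd0' := hd0
        rw [hr] at ht0' hd0' ⊢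
        field_simp at ht0' hd0' ⊢
        ring
      rw [hrep] at hsq'
      have h5 := (isSquare_mul_sq_iff'
        (div_ne_zero (mul_ne_zero hx0 hr0) (mul_ne_zero hd0 ht0))).mp hsq'
      rw [show (1 - y) * (x - y) * (x - y - x * y) = ((1 - y) * (x - y)) * w₀ ^ 2 from by
        rw [hw₀]; ring] at h5
      exact (isSquare_mul_sq_iff' hw00).mp h5
    have hpsi1 : psiOrtho (x * ((1 - y) / (x - y))) ((1 - y) / (x - y)) 1
        = x * ((1 - y) / (x - y)) := by
      simp only [psiOrtho, if_pos IsSquare.one, mul_one]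
    have hpsic : psiOrtho (x * ((1 - y) / (x - y))) ((1 - y) / (x - y)) (y / (x - y - x * y))
        = x * ((1 - y) / (x - y)) * (y / (x - y - x * y)) := if_pos hc_sq
    refine ⟨(x * ((1 - y) / (x - y)), (1 - y) / (x - y)),
      ⟨⟨?_, hA0, ?_, hB0, ?_, ?_, ?_⟩,
        ⟨(y / (x - y - x * y), -1), ⟨⟨?_, ?_⟩, ?_, ?_, ?_, ?_⟩⟩⟩, ?_⟩
    · -- A ≠ B
      intro h
      dsimp only at h
      exact hx1 (mul_right_cancel₀ hB0 (by rw [h, one_mul]))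
    · -- A ≠ 1
      intro h
      dsimp only at h
      rw [← mul_div_assoc, div_eq_one_iff_eq hd0] at h
      rcases mul_eq_zero.mp (show y * (x - 1) = 0 from by linear_combination -h) with h'' | h''
      · exact hy0 h''
      · exact hx1' h''
    · -- B ≠ 1
      intro h
      dsimp only at h
      rw [div_eq_one_iff_eq hd0] at h
      exact hx1 (by linear_combination -h)
    · -- IsSquare (A * B)
      dsimp only
      rw [show x * ((1 - y) / (x - y)) * ((1 - y) / (x - y)) = x * ((1 - y) / (x - y)) ^ 2 from by
        ring]
      exact (isSquare_mul_sq_iff' hB0).mpr ⟨s, hs⟩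
    · -- IsSquare ((1 - A) * (1 - B))
      dsimp only
      rw [show (1 - x * ((1 - y) / (x - y))) * (1 - (1 - y) / (x - y))
          = y * ((x - 1) / (x - y)) ^ 2 from by field_simp; ring]
      exact (isSquare_mul_sq_iff' (div_ne_zero hx1' hd0)).mpr ⟨r, hr⟩
    · -- (c, -1) ≠ (0, 0)
      simp
    · -- AssocEq
      show AssocEq _ _ (y / (x - y - x * y)) (-1)
      unfold AssocEq
      rw [neg_neg, hpsi1, hpsic,
        show x * ((1 - y) / (x - y)) * (y / (x - y - x * y)) - -1
          = x * ((1 - y) / (x - y)) * (y / (x - y - x * y)) + 1 from by ring,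
        show y / (x - y - x * y) - -1 - x * ((1 - y) / (x - y))
          = y / (x - y - x * y) + 1 - x * ((1 - y) / (x - y)) from by ring,
        show psiOrtho (x * ((1 - y) / (x - y))) ((1 - y) / (x - y))
            (x * ((1 - y) / (x - y)) * (y / (x - y - x * y)) + 1)
          = x * ((1 - y) / (x - y)) * (x * ((1 - y) / (x - y)) * (y / (x - y - x * y)) + 1) from
          if_pos hac1,
        show psiOrtho (x * ((1 - y) / (x - y))) ((1 - y) / (x - y))
            (y / (x - y - x * y) + 1 - x * ((1 - y) / (x - y)))
          = (1 - y) / (x - y) * (y / (x - y - x * y) + 1 - x * ((1 - y) / (x - y))) from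
          if_neg hs1]
      field_simp
      ring
    · -- i condition
      simpa using hc_sq
    · -- j condition
      simpa using IsSquare.one
    · -- r condition
      dsimp only
      rw [hpsic, show x * ((1 - y) / (x - y)) * (y / (x - y - x * y)) - -1
          = x * ((1 - y) / (x - y)) * (y / (x - y - x * y)) + 1 from by ring]
      simpa using hac1
    · -- s condition
      dsimp only
      rw [neg_neg, hpsi1, show y / (x - y - x * y) - -1 - x * ((1 - y) / (x - y))
          = y / (x - y - x * y) + 1 - x * ((1 - y) / (x - y)) from by ring]
      exact iff_of_false hs1 (by decide)
    · -- PsiMap value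
      simp only [PsiMap, Prod.mk.injEq]
      constructor
      · exact mul_div_cancel_right₀ x hB0
      · have hnum : 1 - x * ((1 - y) / (x - y)) = y * (x - 1) / (x - y) := by
          field_simp; ring
        have hden : 1 - (1 - y) / (x - y) = (x - 1) / (x - y) := by
          field_simp
          ring
        rw [hnum, hden]
        field_simp
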